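/- Suppose the LP relaxation of maximum weight matching on G admits a unique optimum and this optimum is integral. Then for every fixed point (α, m, γ) of the natural dynamics, γ is the allocation of a Nash bargaining solution: there exists a matching M ⊆ E such that the pair (M, γ) is stable and balanced. -/

import Mathlib

open Finset Filter Topology

/-- The offer `m_{i→j}` computed from message vector `α`:
`m_{i→j} = (w_{ij} − α_{i→j})₊ − (1/2)(w_{ij} − α_{i→j} − α_{j→i})₊`. -/
noncomputable def offer {V : Type*} (w α : V → V → ℝ) (i j : V) : ℝ :=
  max (w i j - α i j) 0 - (1 / 2) * max (w i j - α i j - α j i) 0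

/-- `max_{k ∈ ∂i ∖ {j}} m_{k→i}` (max over the empty set is 0). -/
noncomputable def bestAlt {V : Type*} [Fintype V] [DecidableEq V]
    (Adj : V → V → Prop) [DecidableRel Adj] (w α : V → V → ℝ) (i j : V) : ℝ :=
  (Finset.univ.filter fun k => Adj i k ∧ k ≠ j).fold max 0 fun k => offer w α k i

/-- Earnings `γ_i = max_{k ∈ ∂i} m_{k→i}` (max over the empty set is 0). -/
noncomputable def earn {V : Type*} [Fintype V]
    (Adj : V → V → Prop) [DecidableRel Adj] (w α : V → V → ℝ) (i : V) : ℝ :=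
  (Finset.univ.filter fun k => Adj i k).fold max 0 fun k => offer w α k i

/-- One step of the natural dynamics with damping factor `κ`:
`α'_{i→j} = κ · max_{k∈∂i∖{j}} m_{k→i} + (1−κ) · α_{i→j}`. -/
noncomputable def step {V : Type*} [Fintype V] [DecidableEq V]
    (Adj : V → V → Prop) [DecidableRel Adj] (w : V → V → ℝ) (κ : ℝ)
    (α : V → V → ℝ) : V → V → ℝ :=
  fun i j => κ * bestAlt Adj w α i j + (1 - κ) * α i j

/-- A fixed point of the natural dynamics: the message vector is unchanged by the update. -/
def IsFixedPoint {V : Type*} [Fintype V] [DecidableEq V]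
    (Adj : V → V → Prop) [DecidableRel Adj] (w : V → V → ℝ) (κ : ℝ)
    (α : V → V → ℝ) : Prop :=
  ∀ i j, Adj i j → step Adj w κ α i j = α i j

/-- `W`, the maximum edge weight. -/
noncomputable def maxW {V : Type*} [Fintype V]
    (Adj : V → V → Prop) [DecidableRel Adj] (w : V → V → ℝ) : ℝ :=
  ((Finset.univ ×ˢ Finset.univ).filter fun p : V × V => Adj p.1 p.2).fold max 0
    fun p => w p.1 p.2

/-- A valid message vector: `α ∈ [0, W]^{2|E|}`. -/
def ValidMsg {V : Type*} [Fintype V]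
    (Adj : V → V → Prop) [DecidableRel Adj] (w : V → V → ℝ) (α : V → V → ℝ) : Prop :=
  ∀ i j, Adj i j → α i j ∈ Set.Icc (0 : ℝ) (maxW Adj w)

/-- `G = (V, E)` is a finite simple graph with symmetric positive edge weights. -/
def GoodGraph {V : Type*} (Adj : V → V → Prop) (w : V → V → ℝ) : Prop :=
  (∀ i j, Adj i j → Adj j i) ∧ (∀ i, ¬Adj i i) ∧ (∀ i j, w i j = w j i) ∧
  (∀ i j, Adj i j → 0 < w i j)

/-- Feasibility for the LP relaxation of maximum weight matching:
`x` symmetric, `x_{ij} ≥ 0` on edges, and `∑_{j∈∂i} x_{ij} ≤ 1` at every node. -/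
def LPFeasible {V : Type*} [Fintype V]
    (Adj : V → V → Prop) [DecidableRel Adj] (x : V → V → ℝ) : Prop :=
  (∀ i j, x i j = x j i) ∧ (∀ i j, Adj i j → 0 ≤ x i j) ∧
  (∀ i, ∑ j ∈ Finset.univ.filter (fun j => Adj i j), x i j ≤ 1)

/-- The LP objective `∑_{(i,j)∈E} w_{ij} x_{ij}` (each undirected edge counted once,
i.e. half the sum over ordered pairs). -/
noncomputable def LPobj {V : Type*} [Fintype V]
    (Adj : V → V → Prop) [DecidableRel Adj] (w x : V → V → ℝ) : ℝ :=
  (1 / 2) * ∑ p ∈ (Finset.univ ×ˢ Finset.univ).filter (fun p : V × V => Adj p.1 p.2),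
    w p.1 p.2 * x p.1 p.2

/-- `M ⊆ E` is a matching (as a symmetric relation on nodes). -/
def IsMatching {V : Type*} (Adj M : V → V → Prop) : Prop :=
  (∀ i j, M i j → Adj i j) ∧ (∀ i j, M i j → M j i) ∧ (∀ i j k, M i j → M i k → j = k)

/-- `max_{k ∈ ∂i ∖ {j}} (w_{ik} − γ_k)₊` (max over the empty set is 0). -/
noncomputable def bestAltGamma {V : Type*} [Fintype V] [DecidableEq V]
    (Adj : V → V → Prop) [DecidableRel Adj] (w : V → V → ℝ) (γ : V → ℝ) (i j : V) : ℝ :=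
  (Finset.univ.filter fun k => Adj i k ∧ k ≠ j).fold max 0 fun k => max (w i k - γ k) 0

/-- A Nash bargaining solution `(M, γ)`: a matching with nonnegative profits,
`γ_i + γ_j = w_{ij}` on matched edges, `γ_i = 0` for unmatched nodes,
stability, and balance. -/
def IsNBSolution {V : Type*} [Fintype V] [DecidableEq V]
    (Adj : V → V → Prop) [DecidableRel Adj] (M : V → V → Prop)
    (w : V → V → ℝ) (γ : V → ℝ) : Prop :=
  IsMatching Adj M ∧ (∀ i, 0 ≤ γ i) ∧ (∀ i j, M i j → γ i + γ j = w i j) ∧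
  (∀ i, (∀ j, ¬M i j) → γ i = 0) ∧
  (∀ i j, Adj i j → ¬M i j → w i j ≤ γ i + γ j) ∧
  (∀ i j, M i j → γ i - bestAltGamma Adj w γ i j = γ j - bestAltGamma Adj w γ j i)


set_option linter.unusedSectionVars false
set_option linter.unusedVariables false
set_option maxHeartbeats 1000000

namespace ND

variable {V : Type*} [Fintype V] [DecidableEq V]
  (Adj : V → V → Prop) [DecidableRel Adj] (w α xstar : V → V → ℝ)

/-- The matching induced by a fixed point: edges with positive surplus. -/
def Mrel (i j : V) : Prop := Adj i j ∧ 0 < w i j - α i j - α j i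

section Fold

variable {K : Type*} {s : Finset K} {f : K → ℝ}

lemma fold_max_nonneg : 0 ≤ s.fold max 0 f :=
  (Finset.le_fold_max _).2 (Or.inl le_rfl)

lemma le_fold_max_of_mem {k : K} (hk : k ∈ s) : f k ≤ s.fold max 0 f :=
  (Finset.le_fold_max _).2 (Or.inr ⟨k, hk, le_rfl⟩)

lemma fold_max_attain (h : 0 < s.fold max 0 f) : ∃ k ∈ s, s.fold max 0 f = f k := by
  classical
  induction s using Finset.induction_on with
  | empty => simp at h
  | insert a t hx ih =>
    rw [Finset.fold_insert hx] at h ⊢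
    rcases le_total (t.fold max 0 f) (f a) with hle | hle
    · exact ⟨a, Finset.mem_insert_self a t, (max_eq_left hle)⟩
    · rw [max_eq_right hle] at h ⊢
      obtain ⟨k, hk, hk2⟩ := ih h
      exact ⟨k, Finset.mem_insert_of_mem hk, hk2⟩

end Fold

section Phase1

variable {Adj w α}

lemma neigh_insert {i j : V} (h : Adj i j) :
    (Finset.univ.filter fun k => Adj i k) =
      insert j (Finset.univ.filter fun k => Adj i k ∧ k ≠ j) := by
  ext k
  simp only [Finset.mem_filter, Finset.mem_univ, true_and, Finset.mem_insert]
  by_cases hk : k = j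
  · subst hk; simp [h]
  · simp [hk]

lemma earn_eq_max {i j : V} (h : Adj i j) :
    earn Adj w α i = max (offer w α j i) (bestAlt Adj w α i j) := by
  rw [earn, neigh_insert h, Finset.fold_insert (by simp), bestAlt]

lemma bestAlt_nonneg (i j : V) : 0 ≤ bestAlt Adj w α i j := fold_max_nonneg

lemma earn_nonneg (i : V) : 0 ≤ earn Adj w α i := fold_max_nonneg

lemma bestAlt_ge {i j k : V} (hk : Adj i k) (hkj : k ≠ j) :
    offer w α k i ≤ bestAlt Adj w α i j := by
  have hm : k ∈ Finset.univ.filter (fun k => Adj i k ∧ k ≠ j) :=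
    Finset.mem_filter.2 ⟨Finset.mem_univ k, hk, hkj⟩
  exact le_fold_max_of_mem (f := fun k => offer w α k i) hm

lemma earn_ge_offer {i j : V} (h : Adj i j) : offer w α j i ≤ earn Adj w α i := by
  rw [earn_eq_max h]; exact le_max_left _ _

-- fixed point hypothesis in usable form
variable (hfp : ∀ i j, Adj i j → bestAlt Adj w α i j = α i j)

section WithFP
include hfp

lemma alpha_nonneg {i j : V} (h : Adj i j) : 0 ≤ α i j := by
  rw [← hfp i j h]; exact bestAlt_nonneg i j

lemma earn_ge_alpha {i j : V} (h : Adj i j) : α i j ≤ earn Adj w α i := by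
  rw [earn_eq_max h, ← hfp i j h]; exact le_max_right _ _

end WithFP

lemma offer_eq_of_nonpos {i j : V} (hs : w i j - α i j - α j i ≤ 0) :
    offer w α i j = max (w i j - α i j) 0 := by
  rw [offer, max_eq_right hs, mul_zero, sub_zero]

lemma offer_eq_of_pos {i j : V} (hs : 0 < w i j - α i j - α j i) (hb : 0 ≤ α j i) :
    offer w α i j = α j i + (w i j - α i j - α j i) / 2 := by
  have h1 : 0 ≤ w i j - α i j := by linarith
  rw [offer, max_eq_left h1, max_eq_left hs.le]; ring

lemma offer_nonneg {i j : V} (hb : 0 ≤ α j i) : 0 ≤ offer w α i j := by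
  rcases le_or_gt (w i j - α i j - α j i) 0 with hs | hs
  · rw [offer_eq_of_nonpos hs]; exact le_max_right _ _
  · rw [offer_eq_of_pos hs hb]; positivity

end Phase1

/-- property of the tight neighbors of a bad node -/
def Pk (c b k : V) : Prop :=
  Adj c k ∧ k ≠ b ∧ w c k = earn Adj w α c + earn Adj w α k ∧ ∀ l, ¬ Mrel Adj w α k l

section Phase1b

variable {Adj w α}
variable (hsym : ∀ i j, Adj i j → Adj j i) (hwsym : ∀ i j, w i j = w j i)
variable (hfp : ∀ i j, Adj i j → bestAlt Adj w α i j = α i j)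

include hsym hwsym hfp

lemma Mrel_symm {i j : V} (h : Mrel Adj w α i j) : Mrel Adj w α j i := by
  obtain ⟨hadj, hs⟩ := h
  exact ⟨hsym i j hadj, by rw [hwsym j i]; linarith⟩

omit hsym in
lemma offer_matched {i j : V} (h : Mrel Adj w α i j) (hji : Adj j i) :
    offer w α j i = α i j + (w i j - α i j - α j i) / 2 := by
  obtain ⟨hadj, hs⟩ := h
  have hb : 0 ≤ α i j := alpha_nonneg hfp hadj
  have hs' : 0 < w j i - α j i - α i j := by rw [hwsym j i]; linarith
  rw [offer_eq_of_pos hs' hb, hwsym j i]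
  ring

lemma matched_earn {i j : V} (h : Mrel Adj w α i j) :
    earn Adj w α i = α i j + (w i j - α i j - α j i) / 2 := by
  have hadj := h.1
  have hji := hsym i j hadj
  have ho := offer_matched hwsym hfp h hji
  rw [earn_eq_max hadj, ho, hfp i j hadj]
  have := h.2
  rw [max_eq_left (by linarith)]

lemma matched_tight {i j : V} (h : Mrel Adj w α i j) :
    earn Adj w α i + earn Adj w α j = w i j := by
  have h' := Mrel_symm hsym hwsym hfp h
  rw [matched_earn hsym hwsym hfp h, matched_earn hsym hwsym hfp h']
  have := hwsym i j
  linarith [hwsym j i]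

lemma matched_alpha_lt {i j : V} (h : Mrel Adj w α i j) :
    α i j < earn Adj w α i := by
  rw [matched_earn hsym hwsym hfp h]
  linarith [h.2]

lemma matched_offer_lt {i j k : V} (h : Mrel Adj w α i j) (hk : Adj i k) (hkj : k ≠ j) :
    offer w α k i < earn Adj w α i := by
  calc offer w α k i ≤ bestAlt Adj w α i j := bestAlt_ge hk hkj
  _ = α i j := hfp i j h.1
  _ < earn Adj w α i := matched_alpha_lt hsym hwsym hfp h

lemma M_unique {i j k : V} (h1 : Mrel Adj w α i j) (h2 : Mrel Adj w α i k) : j = k := by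
  by_contra hne
  have e1 := offer_matched hwsym hfp h1 (hsym i j h1.1)
  have e2 := offer_matched hwsym hfp h2 (hsym i k h2.1)
  have l1 : offer w α k i ≤ α i j := by
    rw [← hfp i j h1.1]; exact bestAlt_ge h2.1 (fun hh => hne hh.symm)
  have l2 : offer w α j i ≤ α i k := by
    rw [← hfp i k h2.1]; exact bestAlt_ge h1.1 hne
  rw [e2] at l1; rw [e1] at l2
  linarith [h1.2, h2.2]

omit hsym in
lemma earn_eq_alpha_of_not_M {i j : V} (h : Adj i j) (hnm : ¬ Mrel Adj w α i j) :
    earn Adj w α i = α i j := by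
  have hs : w i j - α i j - α j i ≤ 0 := not_lt.1 (fun hs => hnm ⟨h, hs⟩)
  have hb : 0 ≤ α i j := alpha_nonneg hfp h
  have hs' : w j i - α j i - α i j ≤ 0 := by rw [hwsym j i]; linarith
  have ho : offer w α j i = max (w j i - α j i) 0 := offer_eq_of_nonpos hs'
  rw [earn_eq_max h, hfp i j h, ho]
  exact max_eq_right (max_le (by rw [hwsym j i]; linarith) hb)

lemma dual_feas {i j : V} (h : Adj i j) : w i j ≤ earn Adj w α i + earn Adj w α j := by
  by_cases hm : Mrel Adj w α i j
  · exact (matched_tight hsym hwsym hfp hm).ge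
  · have hnm' : ¬ Mrel Adj w α j i := fun hh => hm (Mrel_symm hsym hwsym hfp hh)
    have e1 := earn_eq_alpha_of_not_M hwsym hfp h hm
    have e2 := earn_eq_alpha_of_not_M hwsym hfp (hsym i j h) hnm'
    have hs : w i j - α i j - α j i ≤ 0 := not_lt.1 (fun hs => hm ⟨h, hs⟩)
    rw [e1, e2]; linarith

omit hsym in
lemma offer_eq_pos_part_of_not_M {i k : V} (hk : Adj i k) (hnm : ¬ Mrel Adj w α i k) :
    offer w α k i = max (w i k - α k i) 0 := by
  have hs : w i k - α i k - α k i ≤ 0 := not_lt.1 (fun hs => hnm ⟨hk, hs⟩)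
  have hs' : w k i - α k i - α i k ≤ 0 := by rw [hwsym k i]; linarith
  rw [offer_eq_of_nonpos hs', hwsym k i]

lemma pointwise_gamma {i j k : V} (h : Mrel Adj w α i j) (hk : Adj i k) (hkj : k ≠ j) :
    max (w i k - earn Adj w α k) 0 = offer w α k i := by
  have hnm : ¬ Mrel Adj w α i k := fun hh => hkj (M_unique hsym hwsym hfp hh h)
  have hnm' : ¬ Mrel Adj w α k i := fun hh => hnm (Mrel_symm hsym hwsym hfp hh)
  rw [offer_eq_pos_part_of_not_M hwsym hfp hk hnm,
    earn_eq_alpha_of_not_M hwsym hfp (hsym i k hk) hnm']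

lemma bestAltGamma_eq {i j : V} (h : Mrel Adj w α i j) :
    bestAltGamma Adj w (earn Adj w α) i j = α i j := by
  rw [bestAltGamma, ← hfp i j h.1, bestAlt]
  apply Finset.fold_congr
  intro k hk
  rw [Finset.mem_filter] at hk
  exact pointwise_gamma hsym hwsym hfp h hk.2.1 hk.2.2

lemma balance {i j : V} (h : Mrel Adj w α i j) :
    earn Adj w α i - bestAltGamma Adj w (earn Adj w α) i j =
    earn Adj w α j - bestAltGamma Adj w (earn Adj w α) j i := by
  have h' := Mrel_symm hsym hwsym hfp h
  rw [bestAltGamma_eq hsym hwsym hfp h, bestAltGamma_eq hsym hwsym hfp h',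
    matched_earn hsym hwsym hfp h, matched_earn hsym hwsym hfp h']
  rw [hwsym j i]; ring

lemma bad_pick {c : V} (hub : ∀ l, ¬ Mrel Adj w α c l) (hgb : 0 < earn Adj w α c) (b : V) :
    ∃ k, Pk Adj w α c b k := by
  -- Step 1: find an attaining neighbor distinct from b
  have step1 : ∃ k, (Adj c k ∧ k ≠ b) ∧ offer w α k c = earn Adj w α c := by
    by_cases hb : Adj c b
    · have hba : bestAlt Adj w α c b = earn Adj w α c := by
        rw [hfp c b hb, ← earn_eq_alpha_of_not_M hwsym hfp hb (hub b)]
      have hpos : 0 < (Finset.univ.filter fun k => Adj c k ∧ k ≠ b).fold max 0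
          (fun k => offer w α k c) := by
        rw [show (Finset.univ.filter fun k => Adj c k ∧ k ≠ b).fold max 0
            (fun k => offer w α k c) = bestAlt Adj w α c b from rfl, hba]
        exact hgb
      obtain ⟨k, hk, he⟩ := fold_max_attain hpos
      rw [Finset.mem_filter] at hk
      refine ⟨k, hk.2, ?_⟩
      rw [← he]
      exact hba.symm ▸ rfl
    · have hpos : 0 < (Finset.univ.filter fun k => Adj c k).fold max 0
          (fun k => offer w α k c) := hgb
      obtain ⟨k, hk, he⟩ := fold_max_attain hpos
      rw [Finset.mem_filter] at hk
      refine ⟨k, ⟨hk.2, fun hkb => hb (hkb ▸ hk.2)⟩, he.symm⟩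
  obtain ⟨k, ⟨hck, hkb⟩, hoff⟩ := step1
  have hnmck : ¬ Mrel Adj w α c k := hub k
  have hnmkc : ¬ Mrel Adj w α k c := fun hh => hnmck (Mrel_symm hsym hwsym hfp hh)
  have hpp := offer_eq_pos_part_of_not_M hwsym hfp hck hnmck
  have hwc : w c k - α k c = earn Adj w α c := by
    rw [hpp] at hoff
    rcases max_cases (w c k - α k c) 0 with ⟨h1, _⟩ | ⟨h1, h2⟩
    · rw [h1] at hoff; exact hoff
    · rw [h1] at hoff; linarith
  have hacks : α c k = earn Adj w α c := (earn_eq_alpha_of_not_M hwsym hfp hck hnmck).symm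
  -- k is unmatched
  have hkU : ∀ l, ¬ Mrel Adj w α k l := by
    intro l hl
    have hlc : l ≠ c := fun hh => hnmkc (hh ▸ hl)
    have hgk : earn Adj w α k = α k c :=
      earn_eq_alpha_of_not_M hwsym hfp (hsym c k hck) hnmkc
    have hock : offer w α c k = max (w k c - α c k) 0 :=
      offer_eq_pos_part_of_not_M hwsym hfp (hsym c k hck) hnmkc
    have hanon : 0 ≤ α k c := alpha_nonneg hfp (hsym c k hck)
    have : offer w α c k = earn Adj w α k := by
      rw [hock, hgk, hacks, hwsym k c]
      have h2 : w c k - earn Adj w α c = α k c := by linarith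
      rw [h2, max_eq_left hanon]
    have hlt := matched_offer_lt hsym hwsym hfp hl (hsym c k hck) (fun hh => hlc hh.symm)
    rw [this] at hlt
    exact lt_irrefl _ hlt
  have hgk : earn Adj w α k = α k c :=
    earn_eq_alpha_of_not_M hwsym hfp (hsym c k hck) (hkU c)
  refine ⟨k, hck, hkb, ?_, hkU⟩
  rw [hgk]
  linarith

end Phase1b


/-! ### Phase 2: LP-based exclusion of positive earnings at unmatched nodes -/

/-- The matching of the integral LP optimum. -/
def Mst (i j : V) : Prop := Adj i j ∧ xstar i j = 1

open Classical in
noncomputable def pst (b : V) : V :=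
  if h : ∃ u, Mst Adj xstar b u then h.choose else b

open Classical in
noncomputable def mpart (c : V) : V :=
  if h : ∃ l, Mrel Adj w α c l then h.choose else c

open Classical in
noncomputable def pickk (c b : V) : V :=
  if h : ∃ k, Pk Adj w α c b k then h.choose else c

open Classical in
/-- one step of the alternating walk -/
noncomputable def phi (s : V × V) : Option (V × V) :=
  if _ : ∃ u, Mst Adj xstar s.2 u then
    if earn Adj w α (pst Adj xstar s.2) = 0 then none
    else if _ : ∃ l, Mrel Adj w α (pst Adj xstar s.2) l then
      some (pst Adj xstar s.2, mpart Adj w α (pst Adj xstar s.2))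
    else some (pst Adj xstar s.2, pickk Adj w α (pst Adj xstar s.2) s.2)
  else none

/-- invariant for walk states -/
def ValidS (s : V × V) : Prop :=
  Adj s.1 s.2 ∧ w s.1 s.2 = earn Adj w α s.1 + earn Adj w α s.2 ∧
  xstar s.1 s.2 ≠ 1 ∧ ((∀ l, ¬ Mrel Adj w α s.2 l) ∨ Mrel Adj w α s.2 s.1)

/-- symmetric indicator of an (undirected) edge -/
def Esym (a b i j : V) : ℝ :=
  (if (i, j) = (a, b) then 1 else 0) + (if (i, j) = (b, a) then 1 else 0)

def rsum (g : V → V → ℝ) (v : V) : ℝ := ∑ j, g v j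

noncomputable def WS (g : V → V → ℝ) : ℝ :=
  (1 / 2) * ∑ p ∈ (Finset.univ ×ˢ Finset.univ).filter (fun p : V × V => Adj p.1 p.2),
    w p.1 p.2 * g p.1 p.2

/-- properties of the accumulated perturbation of a walk started at `(a,b)` -/
def Pert (g : V → V → ℝ) (a b : V) : Prop :=
  (∀ i j, g i j = g j i) ∧
  (∀ i j, ¬ Adj i j → g i j = 0) ∧
  (∀ i j, g i j < 0 → xstar i j = 1) ∧
  (∀ v, (∃ u, Mst Adj xstar v u) → v ≠ a → rsum g v ≤ 0) ∧
  ((∃ u, Mst Adj xstar a u) → rsum g a ≤ 1) ∧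
  1 ≤ g a b ∧
  (∃ C, 0 ≤ C ∧ ∀ i j, |g i j| ≤ C) ∧
  earn Adj w α a ≤ WS Adj w g

section Esect

variable {Adj w α xstar}

lemma esym_symm (a b i j : V) : Esym a b i j = Esym a b j i := by
  simp only [Esym, Prod.mk.injEq]
  rw [add_comm]
  congr 1 <;> exact if_congr and_comm rfl rfl

lemma esym_nonneg (a b i j : V) : 0 ≤ Esym a b i j := by
  unfold Esym; split_ifs <;> norm_num

lemma esym_abs_le (a b i j : V) (hne : a ≠ b) : |Esym a b i j| ≤ 1 := by
  unfold Esym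
  split_ifs with h1 h2 h2 <;> try norm_num
  rw [Prod.mk.injEq] at h1 h2
  exact absurd (h1.1.symm.trans h2.1) hne

lemma esym_self (a b : V) (hne : a ≠ b) : Esym a b a b = 1 := by
  simp [Esym, Prod.mk.injEq, hne]

lemma esym_zero {a b i j : V} (h1 : (i, j) ≠ (a, b)) (h2 : (i, j) ≠ (b, a)) :
    Esym a b i j = 0 := by
  simp [Esym, h1, h2]

lemma esym_supp {a b i j : V} (h : Esym a b i j ≠ 0) : (i, j) = (a, b) ∨ (i, j) = (b, a) := by
  by_contra hc
  push_neg at hc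
  exact h (esym_zero hc.1 hc.2)

lemma rsum_esym (a b v : V) (hne : a ≠ b) :
    rsum (Esym a b) v = (if v = a then 1 else 0) + (if v = b then 1 else 0) := by
  unfold rsum Esym
  rw [Finset.sum_add_distrib]
  congr 1
  · have h1 : ∀ j, (if (v, j) = (a, b) then (1:ℝ) else 0)
        = if j = b then (if v = a then 1 else 0) else 0 := by
      intro j
      by_cases h : j = b <;> by_cases h' : v = a <;> simp [Prod.mk.injEq, h, h']
    simp only [h1]
    rw [Finset.sum_ite_eq' Finset.univ b (fun _ => if v = a then (1:ℝ) else 0)]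
    simp
  · have h1 : ∀ j, (if (v, j) = (b, a) then (1:ℝ) else 0)
        = if j = a then (if v = b then 1 else 0) else 0 := by
      intro j
      by_cases h : j = a <;> by_cases h' : v = b <;> simp [Prod.mk.injEq, h, h']
    simp only [h1]
    rw [Finset.sum_ite_eq' Finset.univ a (fun _ => if v = b then (1:ℝ) else 0)]
    simp

lemma rsum_add (g h : V → V → ℝ) (v : V) :
    rsum (fun i j => g i j + h i j) v = rsum g v + rsum h v := by
  unfold rsum; rw [Finset.sum_add_distrib]

lemma rsum_sub (g h : V → V → ℝ) (v : V) :
    rsum (fun i j => g i j - h i j) v = rsum g v - rsum h v := by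
  unfold rsum; rw [Finset.sum_sub_distrib]

lemma WS_add (g h : V → V → ℝ) :
    WS Adj w (fun i j => g i j + h i j) = WS Adj w g + WS Adj w h := by
  unfold WS
  rw [← mul_add, ← Finset.sum_add_distrib]
  congr 1
  apply Finset.sum_congr rfl
  intro p _
  ring

lemma WS_sub (g h : V → V → ℝ) :
    WS Adj w (fun i j => g i j - h i j) = WS Adj w g - WS Adj w h := by
  unfold WS
  rw [← mul_sub, ← Finset.sum_sub_distrib]
  congr 1
  apply Finset.sum_congr rfl
  intro p _
  ring

lemma WS_esym (a b : V) (hab : Adj a b) (hba : Adj b a) (hwsym : ∀ i j, w i j = w j i) :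
    WS Adj w (Esym a b) = w a b := by
  unfold WS Esym
  have : ∀ p ∈ (Finset.univ ×ˢ Finset.univ).filter (fun p : V × V => Adj p.1 p.2),
      w p.1 p.2 * ((if (p.1, p.2) = (a, b) then (1:ℝ) else 0) + (if (p.1, p.2) = (b, a) then 1 else 0))
      = (if p = (a, b) then w p.1 p.2 else 0) + (if p = (b, a) then w p.1 p.2 else 0) := by
    rintro ⟨p1, p2⟩ _
    rw [mul_add, mul_ite, mul_one, mul_zero, mul_ite, mul_one, mul_zero]
  rw [Finset.sum_congr rfl this, Finset.sum_add_distrib,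
    Finset.sum_ite_eq' _ ((a, b) : V × V) (fun p => w p.1 p.2),
    Finset.sum_ite_eq' _ ((b, a) : V × V) (fun p => w p.1 p.2)]
  have h1 : ((a, b) : V × V) ∈ (Finset.univ ×ˢ Finset.univ).filter (fun p : V × V => Adj p.1 p.2) := by
    simp [hab]
  have h2 : ((b, a) : V × V) ∈ (Finset.univ ×ˢ Finset.univ).filter (fun p : V × V => Adj p.1 p.2) := by
    simp [hba]
  rw [if_pos h1, if_pos h2]
  simp only
  rw [hwsym b a]
  ring

end Esect

section Phase2

variable {Adj w α xstar}
variable (hsym : ∀ i j, Adj i j → Adj j i) (hirr : ∀ i, ¬Adj i i)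
  (hwsym : ∀ i j, w i j = w j i)
  (hfp : ∀ i j, Adj i j → bestAlt Adj w α i j = α i j)
  (hfeas : LPFeasible Adj xstar)
  (hint : ∀ i j, Adj i j → xstar i j = 0 ∨ xstar i j = 1)

lemma rsum_comb (E1 E2 g' : V → V → ℝ) (v : V) :
    rsum (fun i j => E1 i j - E2 i j + g' i j) v = rsum E1 v - rsum E2 v + rsum g' v := by
  unfold rsum
  rw [Finset.sum_add_distrib, Finset.sum_sub_distrib]

lemma WS_comb (E1 E2 g' : V → V → ℝ) :
    WS Adj w (fun i j => E1 i j - E2 i j + g' i j)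
      = WS Adj w E1 - WS Adj w E2 + WS Adj w g' := by
  unfold WS
  have h : ∀ p ∈ (Finset.univ ×ˢ Finset.univ).filter (fun p : V × V => Adj p.1 p.2),
      w p.1 p.2 * (E1 p.1 p.2 - E2 p.1 p.2 + g' p.1 p.2)
        = w p.1 p.2 * E1 p.1 p.2 - w p.1 p.2 * E2 p.1 p.2 + w p.1 p.2 * g' p.1 p.2 := by
    intro p _; ring
  rw [Finset.sum_congr rfl h, Finset.sum_add_distrib, Finset.sum_sub_distrib]
  ring

section MstFacts
include hsym hfeas

lemma mst_symm {b u : V} (h : Mst Adj xstar b u) : Mst Adj xstar u b :=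
  ⟨hsym b u h.1, by rw [hfeas.1 u b]; exact h.2⟩

omit hsym in
lemma mst_unique {b u u' : V} (h1 : Mst Adj xstar b u) (h2 : Mst Adj xstar b u') : u = u' := by
  by_contra hne
  have hsub : ({u, u'} : Finset V) ⊆ Finset.univ.filter (fun j => Adj b j) := by
    intro x hx
    rcases Finset.mem_insert.1 hx with h | h
    · subst h; simp [h1.1]
    · rw [Finset.mem_singleton] at h; subst h; simp [h2.1]
  have h2' : ∑ x ∈ ({u, u'} : Finset V), xstar b x = 2 := by
    rw [Finset.sum_pair hne, h1.2, h2.2]; norm_num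
  have hle : ∑ x ∈ ({u, u'} : Finset V), xstar b x
      ≤ ∑ j ∈ Finset.univ.filter (fun j => Adj b j), xstar b j := by
    apply Finset.sum_le_sum_of_subset_of_nonneg hsub
    intro j hj _
    exact hfeas.2.1 b j (Finset.mem_filter.1 hj).2
  have hone := hfeas.2.2 b
  rw [h2'] at hle
  linarith

omit hsym in
lemma deg_one {b u : V} (h : Mst Adj xstar b u) :
    ∑ j ∈ Finset.univ.filter (fun j => Adj b j), xstar b j = 1 := by
  have hle := hfeas.2.2 b
  have hge : (1:ℝ) ≤ ∑ j ∈ Finset.univ.filter (fun j => Adj b j), xstar b j := by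
    rw [← h.2]
    apply Finset.single_le_sum (fun j hj => hfeas.2.1 b j (Finset.mem_filter.1 hj).2)
    simp [h.1]
  linarith

omit hsym hfeas in
include hint in
lemma deg_zero {b : V} (h : ∀ u, ¬ Mst Adj xstar b u) :
    ∑ j ∈ Finset.univ.filter (fun j => Adj b j), xstar b j = 0 := by
  apply Finset.sum_eq_zero
  intro j hj
  have hadj := (Finset.mem_filter.1 hj).2
  rcases hint b j hadj with h0 | h1
  · exact h0
  · exact absurd ⟨hadj, h1⟩ (h j)

end MstFacts

lemma pst_spec {b : V} (h : ∃ u, Mst Adj xstar b u) : Mst Adj xstar b (pst Adj xstar b) := by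
  rw [pst, dif_pos h]; exact h.choose_spec

lemma mpart_spec {c : V} (h : ∃ l, Mrel Adj w α c l) : Mrel Adj w α c (mpart Adj w α c) := by
  rw [mpart, dif_pos h]; exact h.choose_spec

lemma pickk_spec {c b : V} (h : ∃ k, Pk Adj w α c b k) : Pk Adj w α c b (pickk Adj w α c b) := by
  rw [pickk, dif_pos h]; exact h.choose_spec

/-! base case: walk ends with a good terminal -/
include hsym hirr hwsym hfp hfeas in
lemma pert_base_good {a b : V} (hab : Adj a b)
    (tight : w a b = earn Adj w α a + earn Adj w α b)
    (hnb : ∀ u, ¬ Mst Adj xstar b u) :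
    Pert Adj w α xstar (Esym a b) a b := by
  have hne : a ≠ b := fun h => hirr a (h ▸ hab)
  refine ⟨esym_symm a b, ?_, ?_, ?_, ?_, ?_, ⟨1, zero_le_one, fun i j => esym_abs_le a b i j hne⟩, ?_⟩
  · intro i j h
    by_contra hz
    rcases esym_supp hz with h' | h' <;> rw [Prod.mk.injEq] at h'
    · exact h (by rw [h'.1, h'.2]; exact hab)
    · exact h (by rw [h'.1, h'.2]; exact hsym a b hab)
  · intro i j h
    exact absurd (esym_nonneg a b i j) (not_le.2 h)
  · intro v hv hva
    rw [rsum_esym a b v hne]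
    have hvb : v ≠ b := fun h => hnb _ (h ▸ hv).choose_spec
    rw [if_neg hva, if_neg hvb]
    norm_num
  · intro _
    rw [rsum_esym a b a hne, if_pos rfl, if_neg hne]
    norm_num
  · rw [esym_self a b hne]
  · rw [WS_esym a b hab (hsym a b hab) hwsym, tight]
    linarith [earn_nonneg (Adj := Adj) (w := w) (α := α) b]

/-! base case: walk ends at a zero-earnings node after removing a matched edge -/
include hsym hirr hwsym hfp hfeas in
lemma pert_base_zero {a b c : V} (hab : Adj a b)
    (tight : w a b = earn Adj w α a + earn Adj w α b)
    (hxab : xstar a b ≠ 1)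
    (hMbc : Mst Adj xstar b c)
    (hγc : earn Adj w α c = 0) :
    Pert Adj w α xstar (fun i j => Esym a b i j - Esym b c i j) a b := by
  have hne : a ≠ b := fun h => hirr a (h ▸ hab)
  have hbc : Adj b c := hMbc.1
  have hnebc : b ≠ c := fun h => hirr b (h ▸ hbc)
  have hca : c ≠ a := by
    intro h
    exact hxab (mst_symm hsym hfeas (h ▸ hMbc)).2
  have hdual : w b c ≤ earn Adj w α b + earn Adj w α c := dual_feas hsym hwsym hfp hbc
  refine ⟨?_, ?_, ?_, ?_, ?_, ?_, ⟨2, by norm_num, ?_⟩, ?_⟩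
  · intro i j
    show Esym a b i j - Esym b c i j = Esym a b j i - Esym b c j i
    rw [esym_symm a b i j, esym_symm b c i j]
  · intro i j h
    show Esym a b i j - Esym b c i j = 0
    have h1 : Esym a b i j = 0 := by
      by_contra hz
      rcases esym_supp hz with h' | h' <;> rw [Prod.mk.injEq] at h'
      · exact h (by rw [h'.1, h'.2]; exact hab)
      · exact h (by rw [h'.1, h'.2]; exact hsym a b hab)
    have h2 : Esym b c i j = 0 := by
      by_contra hz
      rcases esym_supp hz with h' | h' <;> rw [Prod.mk.injEq] at h'
      · exact h (by rw [h'.1, h'.2]; exact hbc)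
      · exact h (by rw [h'.1, h'.2]; exact hsym b c hbc)
    rw [h1, h2]; ring
  · intro i j h
    have h' : Esym a b i j - Esym b c i j < 0 := h
    have h2 : Esym b c i j ≠ 0 := by
      intro hz
      rw [hz] at h'
      have := esym_nonneg a b i j
      linarith
    rcases esym_supp h2 with h' | h' <;> rw [Prod.mk.injEq] at h'
    · rw [h'.1, h'.2]; exact hMbc.2
    · rw [h'.1, h'.2, hfeas.1 c b]; exact hMbc.2
  · intro v hv hva
    rw [rsum_sub, rsum_esym a b v hne, rsum_esym b c v hnebc, if_neg hva]
    split_ifs <;> linarith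
  · intro _
    rw [rsum_sub, rsum_esym a b a hne, rsum_esym b c a hnebc,
      if_pos rfl, if_neg hne, if_neg (fun h => hca h.symm)]
    norm_num
  · show (1:ℝ) ≤ Esym a b a b - Esym b c a b
    have hz1 : ((a : V), b) ≠ (b, c) := by
      intro h; rw [Prod.mk.injEq] at h; exact hne h.1
    have hz2 : ((a : V), b) ≠ (c, b) := by
      intro h; rw [Prod.mk.injEq] at h; exact hca h.1.symm
    rw [esym_self a b hne, esym_zero hz1 hz2, sub_zero]
  · intro i j
    show |Esym a b i j - Esym b c i j| ≤ 2
    have l1 := esym_abs_le a b i j hne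
    have l2 := esym_abs_le b c i j hnebc
    have l3 := abs_add_le (Esym a b i j) (-(Esym b c i j))
    rw [abs_neg] at l3
    rw [sub_eq_add_neg]
    linarith
  · have e1 : WS Adj w (fun i j => Esym a b i j - Esym b c i j)
        = WS Adj w (Esym a b) - WS Adj w (Esym b c) := by
      have := WS_comb (Adj := Adj) (w := w) (Esym a b) (Esym b c) (fun _ _ => 0)
      simp only [add_zero] at this
      calc WS Adj w (fun i j => Esym a b i j - Esym b c i j)
          = WS Adj w (fun i j => Esym a b i j - Esym b c i j + (fun _ _ => (0:ℝ)) i j) := by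
            congr 1; funext i j; simp
      _ = WS Adj w (Esym a b) - WS Adj w (Esym b c) + WS Adj w (fun _ _ => (0:ℝ)) :=
            WS_comb _ _ _
      _ = WS Adj w (Esym a b) - WS Adj w (Esym b c) := by
            have : WS Adj w (fun _ _ => (0:ℝ)) = 0 := by
              unfold WS
              rw [Finset.sum_eq_zero (fun p _ => by ring)]
              ring
            rw [this]; ring
    rw [e1, WS_esym a b hab (hsym a b hab) hwsym, WS_esym b c hbc (hsym b c hbc) hwsym, tight]
    linarith

end Phase2

section Phase2c

variable {Adj w α xstar}
variable (hsym : ∀ i j, Adj i j → Adj j i) (hirr : ∀ i, ¬Adj i i)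
  (hwsym : ∀ i j, w i j = w j i)
  (hfp : ∀ i j, Adj i j → bestAlt Adj w α i j = α i j)
  (hfeas : LPFeasible Adj xstar)

include hsym hirr hwsym hfp hfeas in
lemma pert_step {a b c d : V} {g' : V → V → ℝ}
    (hab : Adj a b)
    (tight : w a b = earn Adj w α a + earn Adj w α b)
    (hxab : xstar a b ≠ 1)
    (hMbc : Mst Adj xstar b c)
    (hp' : Pert Adj w α xstar g' c d) :
    Pert Adj w α xstar (fun i j => Esym a b i j - Esym b c i j + g' i j) a b := by
  obtain ⟨P1, P2, P3, P4, P5, P6, ⟨C, hC0, hCb⟩, P8⟩ := hp'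
  have hne : a ≠ b := fun h => hirr a (h ▸ hab)
  have hbc : Adj b c := hMbc.1
  have hnebc : b ≠ c := fun h => hirr b (h ▸ hbc)
  have hca : c ≠ a := by
    intro h
    exact hxab (mst_symm hsym hfeas (h ▸ hMbc)).2
  have hdual : w b c ≤ earn Adj w α b + earn Adj w α c := dual_feas hsym hwsym hfp hbc
  have hg'ab : 0 ≤ g' a b := by
    by_contra hlt
    exact hxab (P3 a b (not_le.1 hlt))
  refine ⟨?_, ?_, ?_, ?_, ?_, ?_, ⟨C + 2, by linarith, ?_⟩, ?_⟩
  · intro i j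
    show Esym a b i j - Esym b c i j + g' i j = Esym a b j i - Esym b c j i + g' j i
    rw [esym_symm a b i j, esym_symm b c i j, P1 i j]
  · intro i j h
    show Esym a b i j - Esym b c i j + g' i j = 0
    have h1 : Esym a b i j = 0 := by
      by_contra hz
      rcases esym_supp hz with h' | h' <;> rw [Prod.mk.injEq] at h'
      · exact h (by rw [h'.1, h'.2]; exact hab)
      · exact h (by rw [h'.1, h'.2]; exact hsym a b hab)
    have h2 : Esym b c i j = 0 := by
      by_contra hz
      rcases esym_supp hz with h' | h' <;> rw [Prod.mk.injEq] at h'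
      · exact h (by rw [h'.1, h'.2]; exact hbc)
      · exact h (by rw [h'.1, h'.2]; exact hsym b c hbc)
    rw [h1, h2, P2 i j h]; ring
  · intro i j h
    have h' : Esym a b i j - Esym b c i j + g' i j < 0 := h
    by_contra hx1
    have hg' : 0 ≤ g' i j := by
      by_contra hlt
      exact hx1 (P3 i j (not_le.1 hlt))
    have hE2 : Esym b c i j = 0 := by
      by_contra hz
      rcases esym_supp hz with h'' | h'' <;> rw [Prod.mk.injEq] at h''
      · exact hx1 (by rw [h''.1, h''.2]; exact hMbc.2)
      · exact hx1 (by rw [h''.1, h''.2, hfeas.1 c b]; exact hMbc.2)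
    have hE1 := esym_nonneg a b i j
    linarith
  · intro v hv hva
    rw [rsum_comb, rsum_esym a b v hne, rsum_esym b c v hnebc, if_neg hva]
    by_cases hvb : v = b
    · have hvc : v ≠ c := fun h => hnebc (hvb.symm.trans h)
      rw [if_pos hvb, if_neg hvc]
      have : rsum g' v ≤ 0 := P4 v hv hvc
      linarith
    · by_cases hvc : v = c
      · rw [if_neg hvb, if_pos hvc]
        have : rsum g' v ≤ 1 := by
          rw [hvc]
          exact P5 ⟨b, mst_symm hsym hfeas hMbc⟩
        linarith
      · rw [if_neg hvb, if_neg hvc]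
        have : rsum g' v ≤ 0 := P4 v hv hvc
        linarith
  · intro hMa
    rw [rsum_comb, rsum_esym a b a hne, rsum_esym b c a hnebc,
      if_pos rfl, if_neg hne, if_neg (fun h => hca h.symm)]
    have : rsum g' a ≤ 0 := P4 a hMa (fun h => hca h.symm)
    linarith
  · show (1:ℝ) ≤ Esym a b a b - Esym b c a b + g' a b
    have hz1 : ((a : V), b) ≠ (b, c) := by
      intro h; rw [Prod.mk.injEq] at h; exact hne h.1
    have hz2 : ((a : V), b) ≠ (c, b) := by
      intro h; rw [Prod.mk.injEq] at h; exact hca h.1.symm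
    rw [esym_self a b hne, esym_zero hz1 hz2]
    linarith
  · intro i j
    show |Esym a b i j - Esym b c i j + g' i j| ≤ C + 2
    have l1 := esym_abs_le a b i j hne
    have l2 := esym_abs_le b c i j hnebc
    have l3 := abs_add_le (Esym a b i j - Esym b c i j) (g' i j)
    have l4 := abs_add_le (Esym a b i j) (-(Esym b c i j))
    rw [abs_neg] at l4
    rw [← sub_eq_add_neg] at l4
    have l5 := hCb i j
    linarith
  · rw [WS_comb, WS_esym a b hab (hsym a b hab) hwsym, WS_esym b c hbc (hsym b c hbc) hwsym]
    have hγb := earn_nonneg (Adj := Adj) (w := w) (α := α) b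
    linarith

include hsym hirr hwsym hfp hfeas in
lemma pert_of_term : ∀ n : ℕ, ∀ a b : V, ValidS Adj w α xstar (a, b) →
    (fun o => o.bind (phi Adj w α xstar))^[n] (some (a, b)) = none →
    ∃ g, Pert Adj w α xstar g a b := by
  intro n
  induction n with
  | zero => intro a b _ h; simp at h
  | succ n ih =>
    intro a b hV hit
    obtain ⟨hab, tight, hxab, hbr⟩ := hV
    rw [Function.iterate_succ_apply] at hit
    have hit' : (fun o => o.bind (phi Adj w α xstar))^[n] (phi Adj w α xstar (a, b)) = none := hit
    by_cases hm : ∃ u, Mst Adj xstar b u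
    · have hMbc : Mst Adj xstar b (pst Adj xstar b) := pst_spec hm
      set c := pst Adj xstar b with hc
      by_cases hz : earn Adj w α c = 0
      · exact ⟨_, pert_base_zero hsym hirr hwsym hfp hfeas hab tight hxab hMbc hz⟩
      · have hγc : 0 < earn Adj w α c :=
          lt_of_le_of_ne (earn_nonneg c) (Ne.symm hz)
        have hca : c ≠ a := fun h => hxab (mst_symm hsym hfeas (h ▸ hMbc)).2
        by_cases hmm : ∃ l, Mrel Adj w α c l
        · have hMcd : Mrel Adj w α c (mpart Adj w α c) := mpart_spec hmm
          set d := mpart Adj w α c with hd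
          have hphi : phi Adj w α xstar (a, b) = some (c, d) := by
            rw [phi, dif_pos hm]
            rw [if_neg hz, dif_pos hmm]
          rw [hphi] at hit'
          have hdb : d ≠ b := by
            intro h
            have hbc' : Mrel Adj w α b c := Mrel_symm hsym hwsym hfp (h ▸ hMcd)
            rcases hbr with h1 | h1
            · exact h1 c hbc'
            · exact hca (M_unique hsym hwsym hfp hbc' h1)
          have hVcd : ValidS Adj w α xstar (c, d) := by
            refine ⟨hMcd.1, (matched_tight hsym hwsym hfp hMcd).symm, ?_,
              Or.inr (Mrel_symm hsym hwsym hfp hMcd)⟩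
            intro hxx
            exact hdb (mst_unique hfeas ⟨hMcd.1, hxx⟩ (mst_symm hsym hfeas hMbc))
          obtain ⟨g', hg'⟩ := ih c d hVcd hit'
          exact ⟨_, pert_step hsym hirr hwsym hfp hfeas hab tight hxab hMbc hg'⟩
        · have hU : ∀ l, ¬ Mrel Adj w α c l := fun l hl => hmm ⟨l, hl⟩
          have hPk : Pk Adj w α c b (pickk Adj w α c b) :=
            pickk_spec (bad_pick hsym hwsym hfp hU hγc b)
          set d := pickk Adj w α c b with hd
          have hphi : phi Adj w α xstar (a, b) = some (c, d) := by
            rw [phi, dif_pos hm]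
            rw [if_neg hz, dif_neg hmm]
          rw [hphi] at hit'
          have hVcd : ValidS Adj w α xstar (c, d) := by
            refine ⟨hPk.1, hPk.2.2.1, ?_, Or.inl hPk.2.2.2⟩
            intro hxx
            exact hPk.2.1 (mst_unique hfeas ⟨hPk.1, hxx⟩ (mst_symm hsym hfeas hMbc))
          obtain ⟨g', hg'⟩ := ih c d hVcd hit'
          exact ⟨_, pert_step hsym hirr hwsym hfp hfeas hab tight hxab hMbc hg'⟩
    · exact ⟨_, pert_base_good hsym hirr hwsym hfp hfeas hab tight (fun u hu => hm ⟨u, hu⟩)⟩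

end Phase2c

section Phase2d

variable {Adj w α xstar}
variable (hsym : ∀ i j, Adj i j → Adj j i) (hirr : ∀ i, ¬Adj i i)
  (hwsym : ∀ i j, w i j = w j i)
  (hfp : ∀ i j, Adj i j → bestAlt Adj w α i j = α i j)
  (hfeas : LPFeasible Adj xstar)
  (hint : ∀ i j, Adj i j → xstar i j = 0 ∨ xstar i j = 1)

lemma obj_split (g : V → V → ℝ) (ε : ℝ) :
    LPobj Adj w (fun i j => xstar i j + ε * g i j)
      = LPobj Adj w xstar + ε * WS Adj w g := by
  unfold LPobj WS
  have h : ∀ p ∈ (Finset.univ ×ˢ Finset.univ).filter (fun p : V × V => Adj p.1 p.2),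
      w p.1 p.2 * (xstar p.1 p.2 + ε * g p.1 p.2)
        = w p.1 p.2 * xstar p.1 p.2 + ε * (w p.1 p.2 * g p.1 p.2) := by
    intro p _; ring
  rw [Finset.sum_congr rfl h, Finset.sum_add_distrib, ← Finset.mul_sum]
  ring

lemma rsum_eq_filter_sum (g : V → V → ℝ) (hsupp : ∀ i j, ¬ Adj i j → g i j = 0) (v : V) :
    ∑ j ∈ Finset.univ.filter (fun j => Adj v j), g v j = rsum g v := by
  unfold rsum
  exact Finset.sum_filter_of_ne (fun j _ hj => by
    by_contra hadj
    exact hj (hsupp v j hadj))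

include hfeas hint in
lemma contra_common
    (hopt : ∀ x, LPFeasible Adj x → LPobj Adj w x ≤ LPobj Adj w xstar)
    (huniq : ∀ x, LPFeasible Adj x → (∃ i j, Adj i j ∧ x i j ≠ xstar i j) →
      LPobj Adj w x < LPobj Adj w xstar)
    (g : V → V → ℝ)
    (hsymg : ∀ i j, g i j = g j i)
    (hsupp : ∀ i j, ¬ Adj i j → g i j = 0)
    (hneg : ∀ i j, g i j < 0 → xstar i j = 1)
    (hrow : ∀ v, (∃ u, Mst Adj xstar v u) → rsum g v ≤ 0)
    (C : ℝ) (hC0 : 0 ≤ C) (hCb : ∀ i j, |g i j| ≤ C)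
    (hWS : 0 ≤ WS Adj w g)
    (hdiff : ∃ i j, Adj i j ∧ 1 ≤ g i j) : False := by
  set D : ℝ := 1 + C + (Fintype.card V : ℝ) * C with hD
  have hD0 : 0 < D := by
    have : (0:ℝ) ≤ (Fintype.card V : ℝ) * C := by positivity
    rw [hD]; linarith
  set ε : ℝ := 1 / D with hε
  have hε0 : 0 < ε := by positivity
  have hεC : ε * C ≤ 1 := by
    rw [hε, div_mul_eq_mul_div, one_mul, div_le_one hD0, hD]
    have : (0:ℝ) ≤ (Fintype.card V : ℝ) * C := by positivity
    linarith
  have hεcard : ε * ((Fintype.card V : ℝ) * C) ≤ 1 := by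
    rw [hε, div_mul_eq_mul_div, one_mul, div_le_one hD0, hD]
    linarith
  set x' : V → V → ℝ := fun i j => xstar i j + ε * g i j with hx'
  have hfeas' : LPFeasible Adj x' := by
    refine ⟨?_, ?_, ?_⟩
    · intro i j
      rw [hx']
      simp only
      rw [hfeas.1 i j, hsymg i j]
    · intro i j hadj
      rw [hx']
      simp only
      rcases le_or_gt 0 (g i j) with hg | hg
      · have := hfeas.2.1 i j hadj
        nlinarith
      · have hx1 : xstar i j = 1 := hneg i j hg
        have habs : |g i j| ≤ C := hCb i j
        have : -C ≤ g i j := by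
          rw [abs_le] at habs; exact habs.1
        have : ε * g i j ≥ -(ε * C) := by nlinarith
        rw [hx1]
        linarith
    · intro v
      have hsplit : ∑ j ∈ Finset.univ.filter (fun j => Adj v j), x' v j
          = (∑ j ∈ Finset.univ.filter (fun j => Adj v j), xstar v j)
            + ε * rsum g v := by
        rw [hx']
        simp only
        rw [Finset.sum_add_distrib, ← Finset.mul_sum, rsum_eq_filter_sum g hsupp v]
      rw [hsplit]
      by_cases hm : ∃ u, Mst Adj xstar v u
      · obtain ⟨u, hu⟩ := hm
        rw [deg_one hfeas hu]
        have h1 : rsum g v ≤ 0 := hrow v ⟨u, hu⟩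
        nlinarith
      · rw [deg_zero hint (fun u hu => hm ⟨u, hu⟩)]
        have habs : |rsum g v| ≤ (Fintype.card V : ℝ) * C := by
          unfold rsum
          calc |∑ j, g v j| ≤ ∑ j, |g v j| := Finset.abs_sum_le_sum_abs _ _
          _ ≤ ∑ _j : V, C := Finset.sum_le_sum (fun j _ => hCb v j)
          _ = (Fintype.card V : ℝ) * C := by
              rw [Finset.sum_const, nsmul_eq_mul, Finset.card_univ]
        have h1 : rsum g v ≤ (Fintype.card V : ℝ) * C := by
          rw [abs_le] at habs; exact habs.2
        have : ε * rsum g v ≤ ε * ((Fintype.card V : ℝ) * C) := by nlinarith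
        linarith
  have hobj : LPobj Adj w x' = LPobj Adj w xstar + ε * WS Adj w g := obj_split g ε
  obtain ⟨i, j, hadj, hgij⟩ := hdiff
  have hne : x' i j ≠ xstar i j := by
    rw [hx']
    simp only
    intro h
    nlinarith
  have hlt := huniq x' hfeas' ⟨i, j, hadj, hne⟩
  rw [hobj] at hlt
  nlinarith

end Phase2d

section Phase2e

variable {Adj w α xstar}
variable (hsym : ∀ i j, Adj i j → Adj j i) (hirr : ∀ i, ¬Adj i i)
  (hwsym : ∀ i j, w i j = w j i)
  (hfp : ∀ i j, Adj i j → bestAlt Adj w α i j = α i j)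
  (hfeas : LPFeasible Adj xstar)

include hsym in
lemma esym_zero_of_not_adj {a b i j : V} (hab : Adj a b) (h : ¬ Adj i j) :
    Esym a b i j = 0 := by
  by_contra hz
  rcases esym_supp hz with h' | h' <;> rw [Prod.mk.injEq] at h'
  · exact h (by rw [h'.1, h'.2]; exact hab)
  · exact h (by rw [h'.1, h'.2]; exact hsym a b hab)

include hfeas in
omit hsym in
lemma esym_zero_of_xstar {a b i j : V} (hx1 : xstar a b = 1) (h : xstar i j ≠ 1) :
    Esym a b i j = 0 := by
  by_contra hz
  rcases esym_supp hz with h' | h' <;> rw [Prod.mk.injEq] at h'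
  · exact h (by rw [h'.1, h'.2]; exact hx1)
  · exact h (by rw [h'.1, h'.2, hfeas.1 b a]; exact hx1)

lemma ediff_abs_le {a b c d i j : V} (h1 : a ≠ b) (h2 : c ≠ d) :
    |Esym a b i j - Esym c d i j| ≤ 2 := by
  have l1 := esym_abs_le a b i j h1
  have l2 := esym_abs_le c d i j h2
  have l3 := abs_add_le (Esym a b i j) (-(Esym c d i j))
  rw [abs_neg] at l3
  rw [← sub_eq_add_neg] at l3
  linarith

lemma rsum_finsum (F : ℕ → V → V → ℝ) (s : Finset ℕ) (v : V) :
    rsum (fun i j => ∑ t ∈ s, F t i j) v = ∑ t ∈ s, rsum (F t) v := by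
  unfold rsum
  rw [Finset.sum_comm]

lemma WS_finsum (F : ℕ → V → V → ℝ) (s : Finset ℕ) :
    WS Adj w (fun i j => ∑ t ∈ s, F t i j) = ∑ t ∈ s, WS Adj w (F t) := by
  unfold WS
  have h : ∀ p ∈ (Finset.univ ×ˢ Finset.univ).filter (fun p : V × V => Adj p.1 p.2),
      w p.1 p.2 * (∑ t ∈ s, F t p.1 p.2) = ∑ t ∈ s, w p.1 p.2 * F t p.1 p.2 :=
    fun p _ => Finset.mul_sum _ _ _
  rw [Finset.sum_congr rfl h, Finset.sum_comm, Finset.mul_sum]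

include hsym hirr hwsym hfp hfeas in
lemma phi_some_spec {s s' : V × V} (hV : ValidS Adj w α xstar s)
    (h : phi Adj w α xstar s = some s') :
    ValidS Adj w α xstar s' ∧ s'.1 = pst Adj xstar s.2 ∧ Mst Adj xstar s.2 s'.1 := by
  obtain ⟨a, b⟩ := s
  obtain ⟨hab, tight, hxab, hbr⟩ := hV
  by_cases hm : ∃ u, Mst Adj xstar b u
  · have hMbc : Mst Adj xstar b (pst Adj xstar b) := pst_spec hm
    by_cases hz : earn Adj w α (pst Adj xstar b) = 0
    · rw [phi, dif_pos hm, if_pos hz] at h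
      exact absurd h (by simp)
    · have hca : pst Adj xstar b ≠ a := fun hcc => hxab (mst_symm hsym hfeas (hcc ▸ hMbc)).2
      by_cases hmm : ∃ l, Mrel Adj w α (pst Adj xstar b) l
      · have hMcd : Mrel Adj w α (pst Adj xstar b) (mpart Adj w α (pst Adj xstar b)) :=
          mpart_spec hmm
        rw [phi, dif_pos hm, if_neg hz, dif_pos hmm] at h
        have hs' : s' = (pst Adj xstar b, mpart Adj w α (pst Adj xstar b)) :=
          (Option.some_inj.1 h).symm
        subst hs'
        have hdb : mpart Adj w α (pst Adj xstar b) ≠ b := by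
          intro hcc
          have hbc' : Mrel Adj w α b (pst Adj xstar b) := by
            rw [hcc] at hMcd
            exact Mrel_symm hsym hwsym hfp hMcd
          rcases hbr with h1 | h1
          · exact h1 _ hbc'
          · exact hca (M_unique hsym hwsym hfp hbc' h1)
        refine ⟨⟨hMcd.1, (matched_tight hsym hwsym hfp hMcd).symm, ?_,
          Or.inr (Mrel_symm hsym hwsym hfp hMcd)⟩, rfl, hMbc⟩
        intro hxx
        exact hdb (mst_unique hfeas ⟨hMcd.1, hxx⟩ (mst_symm hsym hfeas hMbc))
      · have hγc : 0 < earn Adj w α (pst Adj xstar b) :=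
          lt_of_le_of_ne (earn_nonneg _) (Ne.symm hz)
        have hU : ∀ l, ¬ Mrel Adj w α (pst Adj xstar b) l := fun l hl => hmm ⟨l, hl⟩
        have hPk : Pk Adj w α (pst Adj xstar b) b (pickk Adj w α (pst Adj xstar b) b) :=
          pickk_spec (bad_pick hsym hwsym hfp hU hγc b)
        rw [phi, dif_pos hm, if_neg hz, dif_neg hmm] at h
        have hs' : s' = (pst Adj xstar b, pickk Adj w α (pst Adj xstar b) b) :=
          (Option.some_inj.1 h).symm
        subst hs'
        refine ⟨⟨hPk.1, hPk.2.2.1, ?_, Or.inl hPk.2.2.2⟩, rfl, hMbc⟩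
        intro hxx
        exact hPk.2.1 (mst_unique hfeas ⟨hPk.1, hxx⟩ (mst_symm hsym hfeas hMbc))
  · rw [phi, dif_neg hm] at h
    exact absurd h (by simp)

include hsym hirr hwsym hfp hfeas in
lemma cycle_pert {s₀ : V × V} (hV0 : ValidS Adj w α xstar s₀)
    (hinf : ∀ n, (fun o => o.bind (phi Adj w α xstar))^[n] (some s₀) ≠ none) :
    ∃ (g : V → V → ℝ) (C : ℝ),
      (∀ i j, g i j = g j i) ∧
      (∀ i j, ¬ Adj i j → g i j = 0) ∧
      (∀ i j, g i j < 0 → xstar i j = 1) ∧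
      (∀ v, rsum g v ≤ 0) ∧
      0 ≤ C ∧ (∀ i j, |g i j| ≤ C) ∧
      0 ≤ WS Adj w g ∧ (∃ i j, Adj i j ∧ 1 ≤ g i j) := by
  have hsome : ∀ n, ∃ s, (fun o => o.bind (phi Adj w α xstar))^[n] (some s₀) = some s := by
    intro n
    cases h : (fun o => o.bind (phi Adj w α xstar))^[n] (some s₀) with
    | none => exact absurd h (hinf n)
    | some s => exact ⟨s, rfl⟩
  choose seq hseq using hsome
  have hseq0 : seq 0 = s₀ := by
    have h0 := hseq 0
    simp only [Function.iterate_zero, id] at h0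
    exact (Option.some_inj.1 h0).symm
  have hstep : ∀ n, phi Adj w α xstar (seq n) = some (seq (n + 1)) := by
    intro n
    have h1 := hseq (n + 1)
    rw [Function.iterate_succ_apply', hseq n] at h1
    exact h1
  have hvalid : ∀ n, ValidS Adj w α xstar (seq n) := by
    intro n
    induction n with
    | zero => rw [hseq0]; exact hV0
    | succ n ih => exact (phi_some_spec hsym hirr hwsym hfp hfeas ih (hstep n)).1
  obtain ⟨n₁, n₂, hnene, hne_eq⟩ := Finite.exists_ne_map_eq_of_infinite seq
  have hkey : ∃ m q, 0 < q ∧ seq (m + q) = seq m := by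
    rcases lt_or_gt_of_ne hnene with hlt | hlt
    · exact ⟨n₁, n₂ - n₁, by omega, by rw [show n₁ + (n₂ - n₁) = n₂ by omega]; exact hne_eq.symm⟩
    · exact ⟨n₂, n₁ - n₂, by omega, by rw [show n₂ + (n₁ - n₂) = n₁ by omega]; exact hne_eq⟩
  obtain ⟨m, q, hq, hper⟩ := hkey
  set A : ℕ → V := fun t => (seq (m + t)).1 with hA
  set B : ℕ → V := fun t => (seq (m + t)).2 with hB
  have hVt : ∀ t, ValidS Adj w α xstar (A t, B t) := by
    intro t
    have h1 := hvalid (m + t)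
    have hAB : (A t, B t) = seq (m + t) := by rw [hA, hB]
    rw [hAB]
    exact h1
  have hMt : ∀ t, Mst Adj xstar (B t) (A (t + 1)) := by
    intro t
    have h1 := phi_some_spec hsym hirr hwsym hfp hfeas (hvalid (m + t)) (hstep (m + t))
    exact h1.2.2
  have hadjt : ∀ t, Adj (A t) (B t) := fun t => (hVt t).1
  have htightt : ∀ t, w (A t) (B t) = earn Adj w α (A t) + earn Adj w α (B t) :=
    fun t => (hVt t).2.1
  have hxt : ∀ t, xstar (A t) (B t) ≠ 1 := fun t => (hVt t).2.2.1
  have hneAB : ∀ t, A t ≠ B t := fun t hcc => hirr (A t) (hcc ▸ hadjt t)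
  have hneBC : ∀ t, B t ≠ A (t + 1) := fun t hcc => hirr (B t) (hcc ▸ (hMt t).1)
  have hCA : ∀ t, A (t + 1) ≠ A t := by
    intro t hcc
    apply hxt t
    rw [hfeas.1 (A t) (B t)]
    rw [← hcc]
    exact (hMt t).2
  have hAper : A q = A 0 := by
    rw [hA]
    simp only
    rw [hper, Nat.add_zero]
  refine ⟨fun i j => ∑ t ∈ Finset.range q,
      (Esym (A t) (B t) i j - Esym (B t) (A (t + 1)) i j), 2 * q, ?_, ?_, ?_, ?_, ?_, ?_, ?_, ?_⟩
  · intro i j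
    show (∑ t ∈ Finset.range q, _) = _
    apply Finset.sum_congr rfl
    intro t _
    rw [esym_symm (A t) (B t) i j, esym_symm (B t) (A (t + 1)) i j]
  · intro i j h
    apply Finset.sum_eq_zero
    intro t _
    rw [esym_zero_of_not_adj hsym (hadjt t) h,
      esym_zero_of_not_adj hsym (hMt t).1 h, sub_zero]
  · intro i j h
    by_contra hx1
    have hterm : ∀ t ∈ Finset.range q,
        (0:ℝ) ≤ Esym (A t) (B t) i j - Esym (B t) (A (t + 1)) i j := by
      intro t _
      rw [esym_zero_of_xstar hfeas (hMt t).2 hx1, sub_zero]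
      exact esym_nonneg _ _ _ _
    have := Finset.sum_nonneg hterm
    exact absurd this (not_le.2 h)
  · intro v
    rw [rsum_finsum]
    have hterm : ∀ t ∈ Finset.range q,
        rsum (fun i j => Esym (A t) (B t) i j - Esym (B t) (A (t + 1)) i j) v
          = (if v = A t then (1:ℝ) else 0) - (if v = A (t + 1) then 1 else 0) := by
      intro t _
      rw [rsum_sub, rsum_esym _ _ _ (hneAB t), rsum_esym _ _ _ (hneBC t)]
      ring
    rw [Finset.sum_congr rfl hterm, Finset.sum_range_sub' (fun t => if v = A t then (1:ℝ) else 0) q,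
      hAper]
    simp
  · positivity
  · intro i j
    calc |∑ t ∈ Finset.range q, (Esym (A t) (B t) i j - Esym (B t) (A (t + 1)) i j)|
        ≤ ∑ t ∈ Finset.range q, |Esym (A t) (B t) i j - Esym (B t) (A (t + 1)) i j| :=
          Finset.abs_sum_le_sum_abs _ _
    _ ≤ ∑ _t ∈ Finset.range q, (2:ℝ) :=
          Finset.sum_le_sum (fun t _ => ediff_abs_le (hneAB t) (hneBC t))
    _ = 2 * q := by rw [Finset.sum_const, nsmul_eq_mul, Finset.card_range]; ring
  · rw [WS_finsum]
    have hterm : ∀ t ∈ Finset.range q,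
        earn Adj w α (A t) - earn Adj w α (A (t + 1))
          ≤ WS Adj w (fun i j => Esym (A t) (B t) i j - Esym (B t) (A (t + 1)) i j) := by
      intro t _
      rw [WS_sub, WS_esym _ _ (hadjt t) (hsym _ _ (hadjt t)) hwsym,
        WS_esym _ _ (hMt t).1 (hsym _ _ (hMt t).1) hwsym]
      have hd := dual_feas hsym hwsym hfp (hMt t).1
      have ht := htightt t
      linarith
    have h1 := Finset.sum_le_sum hterm
    rw [Finset.sum_range_sub' (fun t => earn Adj w α (A t)) q, hAper, sub_self] at h1
    exact h1
  · refine ⟨A 0, B 0, hadjt 0, ?_⟩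
    have hterm : ∀ t ∈ Finset.range q,
        (if t = 0 then (1:ℝ) else 0)
          ≤ Esym (A t) (B t) (A 0) (B 0) - Esym (B t) (A (t + 1)) (A 0) (B 0) := by
      intro t _
      have hE2 : Esym (B t) (A (t + 1)) (A 0) (B 0) = 0 :=
        esym_zero_of_xstar hfeas (hMt t).2 (hxt 0)
      rw [hE2, sub_zero]
      by_cases ht0 : t = 0
      · rw [if_pos ht0, ht0, esym_self _ _ (hneAB 0)]
      · rw [if_neg ht0]
        exact esym_nonneg _ _ _ _
    have h1 := Finset.sum_le_sum hterm
    have h2 : ∑ t ∈ Finset.range q, (if t = 0 then (1:ℝ) else 0) = 1 := by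
      rw [Finset.sum_ite_eq' (Finset.range q) 0 (fun _ => (1:ℝ))]
      rw [if_pos (Finset.mem_range.2 hq)]
    rw [h2] at h1
    exact h1

end Phase2e

-- PHASE2F --

end ND

/-- If the LP relaxation of maximum weight matching admits a unique optimum and this
optimum is integral, then the earnings vector `γ` of any fixed point of the natural
dynamics is the allocation of a Nash bargaining solution. -/
theorem stmt2 {V : Type*} [Fintype V] [DecidableEq V]
    (Adj : V → V → Prop) [DecidableRel Adj] (w : V → V → ℝ)
    (hG : GoodGraph Adj w) (κ : ℝ) (hκ : κ ∈ Set.Ioo (0 : ℝ) 1)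
    (xstar : V → V → ℝ) (hfeas : LPFeasible Adj xstar)
    (hint : ∀ i j, Adj i j → xstar i j = 0 ∨ xstar i j = 1)
    (hopt : ∀ x, LPFeasible Adj x → LPobj Adj w x ≤ LPobj Adj w xstar)
    (huniq : ∀ x, LPFeasible Adj x → (∃ i j, Adj i j ∧ x i j ≠ xstar i j) →
      LPobj Adj w x < LPobj Adj w xstar)
    (α : V → V → ℝ) (hvalid : ValidMsg Adj w α) (hfp : IsFixedPoint Adj w κ α) :
    ∃ M : V → V → Prop, IsNBSolution Adj M w (earn Adj w α) := by
  classical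
  obtain ⟨hsym, hirr, hwsym, hwpos⟩ := hG
  obtain ⟨hκ0, hκ1⟩ := hκ
  have hfp' : ∀ i j, Adj i j → bestAlt Adj w α i j = α i j := by
    intro i j h
    have h1 := hfp i j h
    unfold step at h1
    have h2 : κ * bestAlt Adj w α i j = κ * α i j := by linarith
    exact mul_left_cancel₀ (ne_of_gt hκ0) h2
  refine ⟨ND.Mrel Adj w α,
    ⟨fun i j h => h.1, fun i j h => ND.Mrel_symm hsym hwsym hfp' h,
      fun i j k h1 h2 => ND.M_unique hsym hwsym hfp' h1 h2⟩,
    fun i => ND.earn_nonneg i,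
    fun i j h => ND.matched_tight hsym hwsym hfp' h,
    ?_,
    fun i j hadj _ => ND.dual_feas hsym hwsym hfp' hadj,
    fun i j h => ND.balance hsym hwsym hfp' h⟩
  -- the hard part: every unmatched node earns zero
  intro i₀ hub
  by_contra hgz
  have hγpos : 0 < earn Adj w α i₀ := lt_of_le_of_ne (ND.earn_nonneg i₀) (Ne.symm hgz)
  -- contradiction from a non-terminating walk
  have hcontra_cycle : ∀ s₀ : V × V, ND.ValidS Adj w α xstar s₀ →
      (∀ n, (fun o => o.bind (ND.phi Adj w α xstar))^[n] (some s₀) ≠ none) → False := by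
    intro s₀ hV0 hinf
    obtain ⟨g, C, c1, c2, c3, c4, c5, c6, c7, ⟨i, j, hij, hgij⟩⟩ :=
      ND.cycle_pert hsym hirr hwsym hfp' hfeas hV0 hinf
    exact ND.contra_common hfeas hint hopt huniq g c1 c2 c3 (fun v _ => c4 v)
      C c5 c6 c7 ⟨i, j, hij, hgij⟩
  by_cases hm0 : ∃ u, ND.Mst Adj xstar i₀ u
  · -- i₀ is matched by the LP optimum
    have hMst : ND.Mst Adj xstar i₀ (ND.pst Adj xstar i₀) := ND.pst_spec hm0
    set u := ND.pst Adj xstar i₀ with hu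
    have hadjU : Adj i₀ u := hMst.1
    have hneu : i₀ ≠ u := fun h => hirr i₀ (h ▸ hadjU)
    obtain ⟨k₀, hPk⟩ := ND.bad_pick hsym hwsym hfp' hub hγpos u
    have hxk0 : xstar i₀ k₀ ≠ 1 := by
      intro hxx
      exact hPk.2.1 (ND.mst_unique hfeas ⟨hPk.1, hxx⟩ hMst)
    have hV0 : ND.ValidS Adj w α xstar (i₀, k₀) :=
      ⟨hPk.1, hPk.2.2.1, hxk0, Or.inl hPk.2.2.2⟩
    by_cases hterm : ∃ n, (fun o => o.bind (ND.phi Adj w α xstar))^[n] (some (i₀, k₀)) = none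
    swap
    · push_neg at hterm
      exact hcontra_cycle _ hV0 hterm
    obtain ⟨n, hn⟩ := hterm
    obtain ⟨gR, R1, R2, R3, R4, R5, R6, ⟨CR, hCR0, hCRb⟩, R8⟩ :=
      ND.pert_of_term hsym hirr hwsym hfp' hfeas n i₀ k₀ hV0 hn
    have hdual0 : w i₀ u ≤ earn Adj w α i₀ + earn Adj w α u :=
      ND.dual_feas hsym hwsym hfp' hadjU
    have hEz1 : ND.Esym i₀ u i₀ k₀ = 0 := by
      apply ND.esym_zero
      · intro h; rw [Prod.mk.injEq] at h; exact hPk.2.1 h.2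
      · intro h; rw [Prod.mk.injEq] at h; exact hneu h.1
    by_cases hzu : earn Adj w α u = 0
    · -- the LP partner of i₀ earns zero
      apply ND.contra_common hfeas hint hopt huniq
        (fun i j => gR i j - ND.Esym i₀ u i j) ?_ ?_ ?_ ?_ (CR + 1) (by linarith) ?_ ?_
        ⟨i₀, k₀, hPk.1, ?_⟩
      · intro i j
        show gR i j - ND.Esym i₀ u i j = gR j i - ND.Esym i₀ u j i
        rw [R1 i j, ND.esym_symm i₀ u i j]
      · intro i j h
        show gR i j - ND.Esym i₀ u i j = 0
        rw [R2 i j h, ND.esym_zero_of_not_adj hsym hadjU h, sub_zero]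
      · intro i j h
        have h' : gR i j - ND.Esym i₀ u i j < 0 := h
        by_contra hx1
        have hg : 0 ≤ gR i j := by
          by_contra hlt
          exact hx1 (R3 i j (not_le.1 hlt))
        have hE : ND.Esym i₀ u i j = 0 := ND.esym_zero_of_xstar hfeas hMst.2 hx1
        linarith
      · intro v hv
        rw [ND.rsum_sub, ND.rsum_esym i₀ u v hneu]
        by_cases hvi : v = i₀
        · have h1 : ND.rsum gR v ≤ 1 := by rw [hvi]; exact R5 hm0
          rw [if_pos hvi, if_neg (fun h => hneu ((hvi.symm.trans h)))]
          linarith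
        · have h1 : ND.rsum gR v ≤ 0 := R4 v hv hvi
          rw [if_neg hvi]
          split_ifs <;> linarith
      · intro i j
        show |gR i j - ND.Esym i₀ u i j| ≤ CR + 1
        have l1 := hCRb i j
        have l2 := ND.esym_abs_le i₀ u i j hneu
        have l3 := abs_add_le (gR i j) (-(ND.Esym i₀ u i j))
        rw [abs_neg] at l3
        rw [← sub_eq_add_neg] at l3
        linarith
      · rw [ND.WS_sub, ND.WS_esym i₀ u hadjU (hsym i₀ u hadjU) hwsym]
        linarith
      · show (1:ℝ) ≤ gR i₀ k₀ - ND.Esym i₀ u i₀ k₀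
        rw [hEz1]
        linarith
    · -- the LP partner of i₀ earns positive: also build a left walk from u
      have hγu : 0 < earn Adj w α u := lt_of_le_of_ne (ND.earn_nonneg u) (Ne.symm hzu)
      have hleft : ∃ d₁, ND.ValidS Adj w α xstar (u, d₁) := by
        by_cases hmm : ∃ l, ND.Mrel Adj w α u l
        · have hMcd := ND.mpart_spec (Adj := Adj) (w := w) (α := α) hmm
          refine ⟨ND.mpart Adj w α u, hMcd.1,
            (ND.matched_tight hsym hwsym hfp' hMcd).symm, ?_,
            Or.inr (ND.Mrel_symm hsym hwsym hfp' hMcd)⟩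
          intro hxx
          have heq : ND.mpart Adj w α u = i₀ :=
            ND.mst_unique hfeas ⟨hMcd.1, hxx⟩ (ND.mst_symm hsym hfeas hMst)
          rw [heq] at hMcd
          exact hub u (ND.Mrel_symm hsym hwsym hfp' hMcd)
        · have hUu : ∀ l, ¬ ND.Mrel Adj w α u l := fun l hl => hmm ⟨l, hl⟩
          obtain ⟨d₁, hPd⟩ := ND.bad_pick hsym hwsym hfp' hUu hγu i₀
          refine ⟨d₁, hPd.1, hPd.2.2.1, ?_, Or.inl hPd.2.2.2⟩
          intro hxx
          exact hPd.2.1 (ND.mst_unique hfeas ⟨hPd.1, hxx⟩ (ND.mst_symm hsym hfeas hMst))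
      obtain ⟨d₁, hVL⟩ := hleft
      by_cases htermL : ∃ n, (fun o => o.bind (ND.phi Adj w α xstar))^[n] (some (u, d₁)) = none
      swap
      · push_neg at htermL
        exact hcontra_cycle _ hVL htermL
      obtain ⟨nL, hnL⟩ := htermL
      obtain ⟨gL, L1, L2, L3, L4, L5, L6, ⟨CL, hCL0, hCLb⟩, L8⟩ :=
        ND.pert_of_term hsym hirr hwsym hfp' hfeas nL u d₁ hVL hnL
      apply ND.contra_common hfeas hint hopt huniq
        (fun i j => gR i j - ND.Esym i₀ u i j + gL i j) ?_ ?_ ?_ ?_ (CR + 1 + CL)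
        (by linarith) ?_ ?_ ⟨i₀, k₀, hPk.1, ?_⟩
      · intro i j
        show gR i j - ND.Esym i₀ u i j + gL i j = gR j i - ND.Esym i₀ u j i + gL j i
        rw [R1 i j, ND.esym_symm i₀ u i j, L1 i j]
      · intro i j h
        show gR i j - ND.Esym i₀ u i j + gL i j = 0
        rw [R2 i j h, L2 i j h, ND.esym_zero_of_not_adj hsym hadjU h]
        ring
      · intro i j h
        have h' : gR i j - ND.Esym i₀ u i j + gL i j < 0 := h
        by_contra hx1
        have hg : 0 ≤ gR i j := by
          by_contra hlt
          exact hx1 (R3 i j (not_le.1 hlt))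
        have hgL : 0 ≤ gL i j := by
          by_contra hlt
          exact hx1 (L3 i j (not_le.1 hlt))
        have hE : ND.Esym i₀ u i j = 0 := ND.esym_zero_of_xstar hfeas hMst.2 hx1
        linarith
      · intro v hv
        rw [ND.rsum_comb, ND.rsum_esym i₀ u v hneu]
        by_cases hvi : v = i₀
        · have h1 : ND.rsum gR v ≤ 1 := by rw [hvi]; exact R5 hm0
          have h2 : ND.rsum gL v ≤ 0 := L4 v hv (fun h => hneu (hvi.symm.trans h))
          rw [if_pos hvi, if_neg (fun h => hneu (hvi.symm.trans h))]
          linarith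
        · by_cases hvu : v = u
          · have h1 : ND.rsum gR v ≤ 0 := R4 v hv hvi
            have h2 : ND.rsum gL v ≤ 1 := by
              rw [hvu]
              exact L5 ⟨i₀, ND.mst_symm hsym hfeas hMst⟩
            rw [if_neg hvi, if_pos hvu]
            linarith
          · have h1 : ND.rsum gR v ≤ 0 := R4 v hv hvi
            have h2 : ND.rsum gL v ≤ 0 := L4 v hv hvu
            rw [if_neg hvi, if_neg hvu]
            linarith
      · intro i j
        show |gR i j - ND.Esym i₀ u i j + gL i j| ≤ CR + 1 + CL
        have l1 := hCRb i j
        have l1' := hCLb i j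
        have l2 := ND.esym_abs_le i₀ u i j hneu
        have l3 := abs_add_le (gR i j - ND.Esym i₀ u i j) (gL i j)
        have l4 := abs_add_le (gR i j) (-(ND.Esym i₀ u i j))
        rw [abs_neg] at l4
        rw [← sub_eq_add_neg] at l4
        linarith
      · rw [ND.WS_comb, ND.WS_esym i₀ u hadjU (hsym i₀ u hadjU) hwsym]
        linarith
      · show (1:ℝ) ≤ gR i₀ k₀ - ND.Esym i₀ u i₀ k₀ + gL i₀ k₀
        have hgL : 0 ≤ gL i₀ k₀ := by
          by_contra hlt
          exact hxk0 (L3 i₀ k₀ (not_le.1 hlt))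
        rw [hEz1]
        linarith
  · -- i₀ is unmatched by the LP optimum
    obtain ⟨k₀, hPk⟩ := ND.bad_pick hsym hwsym hfp' hub hγpos i₀
    have hV0 : ND.ValidS Adj w α xstar (i₀, k₀) :=
      ⟨hPk.1, hPk.2.2.1, (fun hxx => hm0 ⟨k₀, hPk.1, hxx⟩), Or.inl hPk.2.2.2⟩
    by_cases hterm : ∃ n, (fun o => o.bind (ND.phi Adj w α xstar))^[n] (some (i₀, k₀)) = none
    · obtain ⟨n, hn⟩ := hterm
      obtain ⟨gR, R1, R2, R3, R4, R5, R6, ⟨CR, hCR0, hCRb⟩, R8⟩ :=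
        ND.pert_of_term hsym hirr hwsym hfp' hfeas n i₀ k₀ hV0 hn
      apply ND.contra_common hfeas hint hopt huniq gR R1 R2 R3 ?_ CR hCR0 hCRb ?_
        ⟨i₀, k₀, hPk.1, R6⟩
      · intro v hv
        refine R4 v hv ?_
        intro hvi
        exact hm0 (hvi ▸ hv)
      · linarith
    · push_neg at hterm
      exact hcontra_cycle _ hV0 hterm
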